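/- Let H₁ and H₂ be real inner product spaces, let T > 0, let v : ℝ → H₁ and p : ℝ → H₂ be continuous on [0, T] and differentiable on [0, T] with derivatives v'(t) and p'(t), and let F : ℝ → H₂ be continuous on [0, T]. Suppose that for every t ∈ [0, T], ⟨v'(t), v(t)⟩ + ⟨p'(t), p(t)⟩ ≤ ‖F(t)‖ · ‖p(t)‖. Then the supremum over t ∈ [0, T] of ‖v(t)‖² + ‖p(t)‖² is at most 4 · ( ‖v(0)‖² + ‖p(0)‖² + T · ∫₀ᵀ ‖F(t)‖² dt ). -/

import Mathlib

open RealInnerProductSpace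

/-- Stability estimate with the L²-in-time norm of the source: if
`⟪v', v⟫ + ⟪p', p⟫ ≤ ‖F t‖ ‖p t‖` on `[0, T]`, then
`sup_{[0,T]} (‖v‖² + ‖p‖²) ≤ 4 (‖v 0‖² + ‖p 0‖² + T ∫₀ᵀ ‖F‖²)`. -/
theorem stmt_5
    {H₁ H₂ : Type*} [NormedAddCommGroup H₁] [InnerProductSpace ℝ H₁]
    [NormedAddCommGroup H₂] [InnerProductSpace ℝ H₂]
    (T : ℝ) (hT : 0 < T)
    (v : ℝ → H₁) (p : ℝ → H₂) (v' : ℝ → H₁) (p' : ℝ → H₂) (F : ℝ → H₂)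
    (hvc : ContinuousOn v (Set.Icc 0 T)) (hpc : ContinuousOn p (Set.Icc 0 T))
    (hv : ∀ t ∈ Set.Icc (0 : ℝ) T, HasDerivWithinAt v (v' t) (Set.Icc 0 T) t)
    (hp : ∀ t ∈ Set.Icc (0 : ℝ) T, HasDerivWithinAt p (p' t) (Set.Icc 0 T) t)
    (hFc : ContinuousOn F (Set.Icc 0 T))
    (hineq : ∀ t ∈ Set.Icc (0 : ℝ) T,
      ⟪v' t, v t⟫ + ⟪p' t, p t⟫ ≤ ‖F t‖ * ‖p t‖) :
    sSup ((fun t => ‖v t‖ ^ 2 + ‖p t‖ ^ 2) '' Set.Icc 0 T)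
      ≤ 4 * (‖v 0‖ ^ 2 + ‖p 0‖ ^ 2 + T * ∫ t in (0 : ℝ)..T, ‖F t‖ ^ 2) := by
  have huIcc : Set.uIcc (0:ℝ) T = Set.Icc 0 T := Set.uIcc_of_le hT.le
  have h0T : (0:ℝ) ∈ Set.Icc (0:ℝ) T := ⟨le_refl 0, hT.le⟩
  set E : ℝ → ℝ := fun t => ‖v t‖ ^ 2 + ‖p t‖ ^ 2 with hEdef
  have hEc : ContinuousOn E (Set.Icc 0 T) :=
    ((hvc.norm.pow 2).add (hpc.norm.pow 2))
  have hne : (E '' Set.Icc 0 T).Nonempty := ⟨E 0, ⟨0, h0T, rfl⟩⟩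
  have hbdd : BddAbove (E '' Set.Icc 0 T) :=
    (isCompact_Icc.image_of_continuousOn hEc).bddAbove
  set S := sSup (E '' Set.Icc 0 T) with hSdef
  have hleS : ∀ t ∈ Set.Icc (0:ℝ) T, E t ≤ S := fun t ht => le_csSup hbdd ⟨t, ht, rfl⟩
  have hS0 : 0 ≤ S := le_trans (by positivity) (hleS 0 h0T)
  have hpS : ∀ t ∈ Set.Icc (0:ℝ) T, ‖p t‖ ≤ Real.sqrt S := by
    intro t ht
    have h1 : ‖p t‖ ^ 2 ≤ S := by
      have h2 := hleS t ht
      simp only [hEdef] at h2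
      nlinarith [sq_nonneg ‖v t‖]
    calc ‖p t‖ = Real.sqrt (‖p t‖ ^ 2) := (Real.sqrt_sq (norm_nonneg _)).symm
      _ ≤ Real.sqrt S := Real.sqrt_le_sqrt h1
  -- clamped version of F, continuous on all of ℝ
  set G : ℝ → H₂ := fun s => F (max 0 (min s T)) with hGdef
  have hclamp : ∀ s : ℝ, max 0 (min s T) ∈ Set.Icc (0:ℝ) T :=
    fun s => ⟨le_max_left _ _, max_le hT.le (min_le_right _ _)⟩
  have hGc : Continuous G :=
    hFc.comp_continuous (continuous_const.max (continuous_id.min continuous_const)) hclamp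
  have hGF : ∀ s ∈ Set.Icc (0:ℝ) T, G s = F s := by
    intro s hs
    simp only [hGdef, min_eq_left hs.2, max_eq_right hs.1]
  set φ : ℝ → ℝ := fun s => 2 * ‖G s‖ * Real.sqrt S with hφdef
  have hφc : Continuous φ := (continuous_const.mul hGc.norm).mul continuous_const
  have hφ0 : ∀ s, 0 ≤ φ s := fun s => by
    have := Real.sqrt_nonneg S; positivity
  set g : ℝ → ℝ := fun t => ∫ s in (0:ℝ)..t, φ s with hgdef
  have hgd : ∀ t : ℝ, HasDerivAt g (φ t) t :=
    fun t => (hφc.integral_hasStrictDerivAt 0 t).hasDerivAt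
  -- derivative of E at interior points
  have hEd : ∀ x ∈ Set.Ioo (0:ℝ) T,
      HasDerivAt E (2 * ⟪v' x, v x⟫ + 2 * ⟪p' x, p x⟫) x := by
    intro x hx
    have hxI : x ∈ Set.Icc (0:ℝ) T := Set.Ioo_subset_Icc_self hx
    have hmem : Set.Icc (0:ℝ) T ∈ nhds x := Icc_mem_nhds hx.1 hx.2
    have hvx : HasDerivAt v (v' x) x := (hv x hxI).hasDerivAt hmem
    have hpx : HasDerivAt p (p' x) x := (hp x hxI).hasDerivAt hmem
    have hd : HasDerivAt (fun t => ⟪v t, v t⟫ + ⟪p t, p t⟫)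
        ((⟪v x, v' x⟫ + ⟪v' x, v x⟫) + (⟪p x, p' x⟫ + ⟪p' x, p x⟫)) x :=
      (hvx.inner ℝ hvx).add (hpx.inner ℝ hpx)
    have hfun : E = fun t => ⟪v t, v t⟫ + ⟪p t, p t⟫ := by
      funext t
      simp [hEdef, real_inner_self_eq_norm_sq]
    rw [hfun]
    convert hd using 1
    rw [real_inner_comm (v x) (v' x), real_inner_comm (p x) (p' x)]
    ring
  -- E - g is antitone on [0, T]
  have hanti : AntitoneOn (fun t => E t - g t) (Set.Icc 0 T) := by
    apply antitoneOn_of_deriv_nonpos (convex_Icc 0 T)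
    · exact hEc.sub (fun t _ => (hgd t).continuousAt.continuousWithinAt)
    · intro x hx
      rw [interior_Icc] at hx
      exact ((hEd x hx).sub (hgd x)).differentiableAt.differentiableWithinAt
    · intro x hx
      rw [interior_Icc] at hx
      have hxI : x ∈ Set.Icc (0:ℝ) T := Set.Ioo_subset_Icc_self hx
      have hdx := (hEd x hx).sub (hgd x)
      rw [show deriv (fun t => E t - g t) x = deriv (E - g) x from rfl, hdx.deriv]
      have h1 : ⟪v' x, v x⟫ + ⟪p' x, p x⟫ ≤ ‖F x‖ * ‖p x‖ := hineq x hxI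
      have h2 : ‖F x‖ * ‖p x‖ ≤ ‖F x‖ * Real.sqrt S :=
        mul_le_mul_of_nonneg_left (hpS x hxI) (norm_nonneg _)
      have h3 : φ x = 2 * ‖F x‖ * Real.sqrt S := by
        rw [show φ x = 2 * ‖G x‖ * Real.sqrt S from rfl, hGF x hxI]
      rw [h3]
      nlinarith
  -- consequently E t ≤ E 0 + g T for all t
  set I := ∫ s in (0:ℝ)..T, ‖F s‖ with hIdef
  have hFi : IntervalIntegrable (fun s => ‖F s‖) MeasureTheory.volume 0 T := by
    apply ContinuousOn.intervalIntegrable; rw [huIcc]; exact hFc.norm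
  have hI0 : 0 ≤ I :=
    intervalIntegral.integral_nonneg hT.le (fun u _ => norm_nonneg _)
  have hgT : g T = 2 * Real.sqrt S * I := by
    have : g T = ∫ s in (0:ℝ)..T, (2 * Real.sqrt S) * ‖F s‖ := by
      apply intervalIntegral.integral_congr
      intro s hs
      rw [huIcc] at hs
      simp only [hφdef, hGF s hs]; ring
    rw [this, intervalIntegral.integral_const_mul, hIdef]
  have hEtb : ∀ t ∈ Set.Icc (0:ℝ) T, E t ≤ E 0 + 2 * Real.sqrt S * I := by
    intro t ht
    have h1 : E t - g t ≤ E 0 - g 0 := hanti h0T ht ht.1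
    have h2 : g 0 = 0 := intervalIntegral.integral_same
    have h3 : g t ≤ g T := by
      have hadd : (∫ s in (0:ℝ)..t, φ s) + (∫ s in t..T, φ s) = ∫ s in (0:ℝ)..T, φ s :=
        intervalIntegral.integral_add_adjacent_intervals
          (hφc.intervalIntegrable _ _) (hφc.intervalIntegrable _ _)
      have hnn : 0 ≤ ∫ s in t..T, φ s :=
        intervalIntegral.integral_nonneg ht.2 (fun u _ => hφ0 u)
      simp only [hgdef]
      linarith
    linarith [hgT ▸ h3]
  have hSb : S ≤ E 0 + 2 * Real.sqrt S * I := by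
    apply csSup_le hne
    rintro y ⟨t, ht, rfl⟩
    exact hEtb t ht
  -- Cauchy–Schwarz : I ^ 2 ≤ T * ∫ ‖F‖²
  set J := ∫ s in (0:ℝ)..T, ‖F s‖ ^ 2 with hJdef
  have hF2i : IntervalIntegrable (fun s => ‖F s‖ ^ 2) MeasureTheory.volume 0 T := by
    apply ContinuousOn.intervalIntegrable; rw [huIcc]; exact hFc.norm.pow 2
  have hCS : I ^ 2 ≤ T * J := by
    set c : ℝ := I / T with hcdef
    have h0 : 0 ≤ ∫ s in (0:ℝ)..T, (‖F s‖ - c) ^ 2 :=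
      intervalIntegral.integral_nonneg hT.le (fun u _ => sq_nonneg _)
    have hexp : (fun s => (‖F s‖ - c) ^ 2)
        = fun s => ‖F s‖ ^ 2 - (2 * c) * ‖F s‖ + c ^ 2 := by
      funext s; ring
    rw [hexp] at h0
    rw [intervalIntegral.integral_add ((hF2i.sub (hFi.const_mul (2 * c))))
      intervalIntegrable_const, intervalIntegral.integral_sub hF2i (hFi.const_mul (2 * c)),
      intervalIntegral.integral_const_mul, intervalIntegral.integral_const] at h0
    have hc : c * T = I := by rw [hcdef, div_mul_cancel₀ I hT.ne']
    have h5 : 0 ≤ (J - 2 * c * I) + T * c ^ 2 := by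
      simpa [hIdef, hJdef] using h0
    nlinarith [hT, sq_nonneg c]
  have hsqS : Real.sqrt S ^ 2 = S := Real.sq_sqrt hS0
  have hE0 : E 0 = ‖v 0‖ ^ 2 + ‖p 0‖ ^ 2 := rfl
  have hE00 : 0 ≤ E 0 := by rw [hE0]; positivity
  calc S ≤ E 0 + 2 * Real.sqrt S * I := hSb
    _ ≤ 4 * (‖v 0‖ ^ 2 + ‖p 0‖ ^ 2 + T * J) := by
        rw [← hE0]
        nlinarith [sq_nonneg (Real.sqrt S - 2 * I), hCS, hI0, hsqS, hE00]
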